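/- For the infinite k-regular tree T_k with k ≥ 3, the overlapping index is infinite: for every m ∈ ℕ there is a family of balls in T_k such that no subfamily with the same union has overlap bounded by m. -/

import Mathlib

open scoped ENNReal

def gball {V : Type*} (G : SimpleGraph V) (p : V × ℕ) : Set V := {y | G.dist p.1 y ≤ p.2}

def OverlapBound {V : Type*} (G : SimpleGraph V) (m : ℕ) : Prop :=
  ∀ S : Set (V × ℕ), ∃ I ⊆ S, (⋃ p ∈ I, gball G p) = (⋃ p ∈ S, gball G p) ∧
    ∀ z : V, ({p ∈ I | z ∈ gball G p}).encard ≤ m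

section Helpers

open SimpleGraph Walk

variable {V : Type*} [DecidableEq V] {G : SimpleGraph V}

lemma path_len (ht : G.IsTree) {x y : V} {p : G.Walk x y} (hp : p.IsPath) :
    p.length = G.dist x y := by
  obtain ⟨q, hq⟩ := ht.isConnected.exists_walk_length_eq_dist x y
  have h1 : q.bypass.length = G.dist x y :=
    le_antisymm (hq ▸ q.length_bypass_le) (G.dist_le _)
  have h2 := ht.IsAcyclic.path_unique ⟨p, hp⟩ ⟨q.bypass, q.bypass_isPath⟩
  simp only [Subtype.ext_iff] at h2
  simpa [← h2] using h1

lemma support_dist_add (ht : G.IsTree) {x y v : V} {p : G.Walk x y} (hp : p.IsPath)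
    (hv : v ∈ p.support) : G.dist x v + G.dist v y = G.dist x y := by
  rw [← path_len ht hp, ← path_len ht (hp.takeUntil hv), ← path_len ht (hp.dropUntil hv),
    ← length_append]
  rw [take_spec p hv]

lemma append_isPath (ht : G.IsTree) {x y z : V} {p : G.Walk x y} {q : G.Walk y z}
    (hp : p.IsPath) (hq : q.IsPath) (hadd : G.dist x y + G.dist y z = G.dist x z) :
    (p.append q).IsPath := by
  rw [isPath_def, support_append, List.nodup_append]
  refine ⟨hp.support_nodup, (List.nodup_cons.mp (q.support_eq_cons ▸ hq.support_nodup)).2,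
    fun v hv b hv' hvb => ?_⟩
  subst hvb
  have hv'' : v ∈ q.support := List.mem_of_mem_tail hv'
  have h1 := support_dist_add ht hp hv
  have h2 := support_dist_add ht hq hv''
  have h3 := ht.isConnected.dist_triangle (u := x) (v := v) (w := z)
  have hvy : v = y := by
    have : G.dist y v = 0 := by omega
    have hr : G.Reachable y v := ht.isConnected y v
    exact ((hr.dist_eq_zero_iff).mp this).symm
  subst hvy
  have : v ∉ q.support.tail := (List.nodup_cons.mp (q.support_eq_cons ▸ hq.support_nodup)).1
  exact this hv'

lemma mid_unique (ht : G.IsTree) {x z a b : V}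
    (ha : G.dist x a + G.dist a z = G.dist x z) (hb : G.dist x b + G.dist b z = G.dist x z)
    (hab : G.dist x a = G.dist x b) : a = b := by
  obtain ⟨p, hp⟩ := ht.isConnected.exists_walk_length_eq_dist x a
  obtain ⟨q, hq⟩ := ht.isConnected.exists_walk_length_eq_dist a z
  obtain ⟨p', hp'⟩ := ht.isConnected.exists_walk_length_eq_dist x b
  obtain ⟨q', hq'⟩ := ht.isConnected.exists_walk_length_eq_dist b z
  have hpp : p.bypass.IsPath := p.bypass_isPath
  -- use bypasses to get paths with same lengths
  have hlp : p.bypass.length = G.dist x a := path_len ht hpp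
  have hlq : q.bypass.length = G.dist a z := path_len ht q.bypass_isPath
  have hlp' : p'.bypass.length = G.dist x b := path_len ht p'.bypass_isPath
  have w1 : (p.bypass.append q.bypass).IsPath := append_isPath ht hpp q.bypass_isPath ha
  have w2 : (p'.bypass.append q'.bypass).IsPath :=
    append_isPath ht p'.bypass_isPath q'.bypass_isPath hb
  have h2 := ht.IsAcyclic.path_unique ⟨_, w1⟩ ⟨_, w2⟩
  simp only [Subtype.ext_iff] at h2
  have := congrArg (fun w : G.Walk x z => w.getVert (G.dist x a)) h2
  simpa [getVert_append, hlp, hlp', hab, getVert_length] using this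

lemma near_neighbor_subsingleton (ht : G.IsTree) (x y : V) :
    {z : V | G.Adj y z ∧ G.dist x z ≤ G.dist x y}.Subsingleton := by
  have key : ∀ z, G.Adj y z → G.dist x z ≤ G.dist x y →
      ∃ (w : G.Walk x y), w.IsPath ∧ w.reverse.getVert 1 = z := by
    intro z hzy hzd
    obtain ⟨p, hp⟩ := ht.isConnected.exists_walk_length_eq_dist x z
    have hpp : p.bypass.IsPath := p.bypass_isPath
    have hlp : p.bypass.length = G.dist x z := path_len ht hpp
    have hyz : G.dist y z = 1 := dist_eq_one_iff_adj.mpr hzy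
    have hy : y ∉ p.bypass.support := by
      intro hy
      have := support_dist_add ht hpp hy
      rw [hyz] at this
      omega
    have hcp : (p.bypass.concat hzy.symm).IsPath := by
      rw [← isPath_reverse_iff, reverse_concat]
      exact hpp.reverse.cons (by simpa using hy)
    refine ⟨p.bypass.concat hzy.symm, hcp, ?_⟩
    rw [reverse_concat]
    exact (getVert_cons_succ (n := 0) _ _).trans (getVert_zero _)
  intro z hz z' hz'
  obtain ⟨w, hw, hwz⟩ := key z hz.1 hz.2
  obtain ⟨w', hw', hwz'⟩ := key z' hz'.1 hz'.2
  have h2 := ht.IsAcyclic.path_unique ⟨w, hw⟩ ⟨w', hw'⟩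
  simp only [Subtype.ext_iff] at h2
  rw [← hwz, ← hwz', h2]

lemma exists_two_ext (ht : G.IsTree) {k : ℕ} (hk : 3 ≤ k)
    (hreg : ∀ v : V, (G.neighborSet v).ncard = k) (x y : V) :
    ∃ z₁ z₂ : V, z₁ ≠ z₂ ∧ G.Adj y z₁ ∧ G.Adj y z₂ ∧
      G.dist x z₁ = G.dist x y + 1 ∧ G.dist x z₂ = G.dist x y + 1 := by
  classical
  set N := G.neighborSet y with hN
  have hNfin : N.Finite := by
    by_contra h
    have := Set.Infinite.ncard (s := N) h
    rw [hreg y] at this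
    omega
  set B : Set V := {z ∈ N | G.dist x z ≤ G.dist x y} with hB
  have hBsub : B ⊆ N := fun z hz => hz.1
  have hBss : B.Subsingleton := fun a ha b hb =>
    near_neighbor_subsingleton ht x y ⟨ha.1, ha.2⟩ ⟨hb.1, hb.2⟩
  have hB1 : B.ncard ≤ 1 := (Set.ncard_le_one_iff (hNfin.subset hBsub)).mpr
    (fun ha hb => hBss ha hb)
  have hdiff : (N \ B).ncard = N.ncard - B.ncard := Set.ncard_diff hBsub (hNfin.subset hBsub)
  have h2 : 1 < (N \ B).ncard := by
    rw [hdiff, hreg y]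
    omega
  obtain ⟨z₁, z₂, hz₁, hz₂, hne⟩ := (Set.one_lt_ncard_iff (Set.Finite.diff hNfin : (N \ B).Finite)).mp h2
  have hfact : ∀ z, z ∈ N \ B → G.Adj y z ∧ G.dist x z = G.dist x y + 1 := by
    intro z hz
    have hadj : G.Adj y z := hz.1
    have hgt : G.dist x y < G.dist x z := by
      by_contra h
      exact hz.2 ⟨hz.1, by omega⟩
    have hle : G.dist x z ≤ G.dist x y + 1 := by
      have := ht.isConnected.dist_triangle (u := x) (v := y) (w := z)
      rw [dist_eq_one_iff_adj.mpr hadj] at this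
      exact this
    exact ⟨hadj, by omega⟩
  obtain ⟨ha1, hd1⟩ := hfact z₁ hz₁
  obtain ⟨ha2, hd2⟩ := hfact z₂ hz₂
  exact ⟨z₁, z₂, hne, ha1, ha2, hd1, hd2⟩

end Helpers

open SimpleGraph

theorem stmt10 {V : Type*} (G : SimpleGraph V) (hV : Infinite V) (htree : G.IsTree)
    (k : ℕ) (hk : 3 ≤ k) (hreg : ∀ x : V, (G.neighborSet x).ncard = k) :
    ∀ m : ℕ, ¬ OverlapBound G m := by
  classical
  intro m hOB
  obtain ⟨x⟩ : Nonempty V := inferInstance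
  have hFex : ∀ v : V, ∃ z : V × V, z.1 ≠ z.2 ∧ G.Adj v z.1 ∧ G.Adj v z.2 ∧
      G.dist x z.1 = G.dist x v + 1 ∧ G.dist x z.2 = G.dist x v + 1 := by
    intro v
    obtain ⟨a, b, h1, h2, h3, h4, h5⟩ := exists_two_ext htree hk hreg x v
    exact ⟨(a, b), h1, h2, h3, h4, h5⟩
  choose F hF1 hF2 hF3 hF4 hF5 using hFex
  -- extension function
  let e : V → ℕ → V := fun y t => Nat.rec y (fun _ p => (F p).1) t
  have he0 : ∀ y, e y 0 = y := fun y => rfl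
  have heS : ∀ y t, e y (t + 1) = (F (e y t)).1 := fun y t => rfl
  have hed : ∀ y t, G.dist x (e y t) = G.dist x y + t := by
    intro y t
    induction t with
    | zero => simp [he0]
    | succ t ih => rw [heS, hF4, ih]; ring
  have heb : ∀ y t, G.dist y (e y t) ≤ t := by
    intro y t
    induction t with
    | zero => simp [he0]
    | succ t ih =>
      calc G.dist y (e y (t+1)) ≤ G.dist y (e y t) + G.dist (e y t) (e y (t+1)) :=
            htree.isConnected.dist_triangle
        _ ≤ t + 1 := by
            have h1 : G.dist (e y t) (e y (t+1)) = 1 := by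
              rw [heS]; exact dist_eq_one_iff_adj.mpr (hF2 (e y t))
            omega
  -- ray and branch points
  let v : ℕ → V := fun n => e x n
  have hvd : ∀ n, G.dist x (v n) = n := by
    intro n
    have h := hed x n
    rwa [SimpleGraph.dist_self, Nat.zero_add] at h
  have hvchain : ∀ a t, G.dist (v a) (v (a + t)) ≤ t := by
    intro a t
    induction t with
    | zero => simp [SimpleGraph.dist_self]
    | succ t ih =>
      calc G.dist (v a) (v (a + (t+1)))
          ≤ G.dist (v a) (v (a + t)) + G.dist (v (a + t)) (v (a + t + 1)) :=
            htree.isConnected.dist_triangle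
        _ ≤ t + 1 := by
            have h1 : G.dist (v (a+t)) (v (a+t+1)) = 1 :=
              dist_eq_one_iff_adj.mpr (hF2 (v (a+t)))
            omega
  let w : ℕ → V := fun n => (F (v n)).2
  have hwd : ∀ n, G.dist x (w n) = n + 1 := by
    intro n
    have := hF5 (v n)
    rwa [hvd n] at this
  have hwne : ∀ n, w n ≠ v (n + 1) := fun n => (hF1 (v n)).symm
  have hwadj : ∀ n, G.dist (v n) (w n) = 1 := fun n => dist_eq_one_iff_adj.mpr (hF3 (v n))
  set r : ℕ := m + 2 with hr
  let Y : ℕ → V := fun i => e (w i) (r - (i + 1))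
  let Z : ℕ → V := fun i => e (Y i) r
  have hYd : ∀ i ≤ m + 1, G.dist x (Y i) = r := by
    intro i hi
    have := hed (w i) (r - (i+1))
    rw [hwd i] at this
    simpa [Y] using this.trans (by omega)
  have hYw : ∀ i ≤ m + 1, G.dist (w i) (Y i) = r - (i + 1) := by
    intro i hi
    have h1 : G.dist (w i) (Y i) ≤ r - (i+1) := heb (w i) (r - (i+1))
    have h2 : G.dist x (Y i) ≤ G.dist x (w i) + G.dist (w i) (Y i) :=
      htree.isConnected.dist_triangle
    rw [hYd i hi, hwd i] at h2
    omega
  have hZd : ∀ i ≤ m + 1, G.dist x (Z i) = 2 * r := by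
    intro i hi
    have := hed (Y i) r
    rw [hYd i hi] at this
    simpa [Z] using this.trans (by omega)
  have hYZ : ∀ i ≤ m + 1, G.dist (Y i) (Z i) = r := by
    intro i hi
    have h1 : G.dist (Y i) (Z i) ≤ r := heb (Y i) r
    have h2 : G.dist x (Z i) ≤ G.dist x (Y i) + G.dist (Y i) (Z i) :=
      htree.isConnected.dist_triangle
    rw [hZd i hi, hYd i hi] at h2
    omega
  -- key exclusion: other balls do not contain the private point
  have key : ∀ i ≤ m + 1, ∀ j ≤ m + 1, G.dist (Y j) (Z i) ≤ r → Y i = Y j := by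
    intro i hi j hj hle
    have h2 : G.dist x (Z i) ≤ G.dist x (Y j) + G.dist (Y j) (Z i) :=
      htree.isConnected.dist_triangle
    rw [hZd i hi, hYd j hj] at h2
    have heq : G.dist (Y j) (Z i) = r := by omega
    refine mid_unique htree (x := x) (z := Z i) ?_ ?_ ?_
    · rw [hZd i hi, hYd i hi, hYZ i hi]; ring
    · rw [hZd i hi, hYd j hj, heq]; ring
    · rw [hYd i hi, hYd j hj]
  -- injectivity of Y on [0, m+1]
  have hYinj : ∀ i ≤ m + 1, ∀ j ≤ m + 1, Y i = Y j → i = j := by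
    have main : ∀ i j, i < j → j ≤ m + 1 → Y i ≠ Y j := by
      intro i j hij hj hYe
      have hi : i ≤ m + 1 := by omega
      -- w i and v (i+1) are both "midpoints at distance i+1" of (x, Y i)
      have ha : G.dist x (w i) + G.dist (w i) (Y i) = G.dist x (Y i) := by
        rw [hwd i, hYw i hi, hYd i hi]; omega
      have hbub : G.dist (v (i+1)) (Y j) ≤ r - (i + 1) := by
        have c1 : G.dist (v (i+1)) (v j) ≤ j - (i+1) := by
          have := hvchain (i+1) (j - (i+1))
          rwa [Nat.add_sub_cancel' (by omega : i + 1 ≤ j)] at this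
        have c2 : G.dist (v j) (w j) = 1 := hwadj j
        have c3 : G.dist (w j) (Y j) = r - (j + 1) := hYw j hj
        have t1 : G.dist (v (i+1)) (w j) ≤ G.dist (v (i+1)) (v j) + G.dist (v j) (w j) :=
          htree.isConnected.dist_triangle
        have t2 : G.dist (v (i+1)) (Y j) ≤ G.dist (v (i+1)) (w j) + G.dist (w j) (Y j) :=
          htree.isConnected.dist_triangle
        omega
      have hblb : G.dist x (Y j) ≤ G.dist x (v (i+1)) + G.dist (v (i+1)) (Y j) :=
        htree.isConnected.dist_triangle
      rw [hYd j hj, hvd (i+1)] at hblb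
      have hb : G.dist x (v (i+1)) + G.dist (v (i+1)) (Y i) = G.dist x (Y i) := by
        rw [hYe, hvd (i+1), hYd j hj]
        omega
      have hd : G.dist x (w i) = G.dist x (v (i+1)) := by
        rw [hwd i, hvd (i+1)]
      have := mid_unique htree (x := x) (z := Y i) ha hb hd
      exact hwne i this
    intro i hi j hj hYe
    rcases lt_trichotomy i j with h | h | h
    · exact absurd hYe (main i j h hj)
    · exact h
    · exact absurd hYe.symm (main j i h hi)
  -- the family of balls
  set S : Set (V × ℕ) := {p | ∃ i ≤ m + 1, p = (Y i, r)} with hS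
  obtain ⟨I, hIsub, hunion, hover⟩ := hOB S
  -- every ball is needed
  have hall : ∀ i ≤ m + 1, (Y i, r) ∈ I := by
    intro i hi
    have hmem : Z i ∈ ⋃ p ∈ S, gball G p := by
      refine Set.mem_biUnion (show (Y i, r) ∈ S from ⟨i, hi, rfl⟩) ?_
      show G.dist (Y i) (Z i) ≤ r
      rw [hYZ i hi]
    rw [← hunion] at hmem
    obtain ⟨p, hpI, hpz⟩ := Set.mem_iUnion₂.mp hmem
    obtain ⟨j, hj, rfl⟩ := hIsub hpI
    have : G.dist (Y j) (Z i) ≤ r := hpz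
    have hYij : Y i = Y j := key i hi j hj this
    rwa [← hYij] at hpI
  -- x is in all the balls, contradiction with overlap bound
  have hxball : ∀ i ≤ m + 1, x ∈ gball G (Y i, r) := by
    intro i hi
    show G.dist (Y i) x ≤ r
    rw [SimpleGraph.dist_comm, hYd i hi]
  set T : Set (V × ℕ) := {p ∈ I | x ∈ gball G p} with hT
  have hcard : (m + 2 : ℕ∞) ≤ T.encard := by
    have hsub : (fun i => ((Y i, r) : V × ℕ)) '' (Set.Iic (m+1)) ⊆ T := by
      rintro p ⟨i, hi, rfl⟩
      exact ⟨hall i hi, hxball i hi⟩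
    have hinj : Set.InjOn (fun i => ((Y i, r) : V × ℕ)) (Set.Iic (m+1)) := by
      intro i hi j hj hij
      exact hYinj i hi j hj (congrArg Prod.fst hij)
    calc (m + 2 : ℕ∞) = ((Finset.Iic (m+1) : Finset ℕ) : Set ℕ).encard := by
          rw [Set.encard_coe_eq_coe_finsetCard, Nat.card_Iic]
          push_cast
          ring
      _ = (Set.Iic (m+1) : Set ℕ).encard := by rw [Finset.coe_Iic]
      _ = ((fun i => ((Y i, r) : V × ℕ)) '' (Set.Iic (m+1))).encard := (hinj.encard_image).symm
      _ ≤ T.encard := Set.encard_le_encard hsub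
  have := hover x
  rw [← hT] at this
  have hcontra : (m + 2 : ℕ∞) ≤ (m : ℕ∞) := hcard.trans this
  have : (m + 2 : ℕ) ≤ m := by exact_mod_cast hcontra
  omega
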